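/- arXiv:1409.8496 — 4 statements merged into one kernel-verified Lean document; each statement's English description precedes it below -/
import Mathlib

section
/- Let c > 0, b ≥ 0 and let (β_n)_{n≥0} be a sequence of nonnegative reals with β_0 = 1 satisfying β_n ≤ β_{n+1}^{1/2} β_{n-1}^{1/2} and β_{n+1} ≤ ((n)²/c) β_{n-1} + (b/c) β_n for all n ≥ 1. Then β_n ≤ (b/c + n/√c) β_{n-1} for all n ≥ 1. -/
theorem moment_recursion_linear (c b : ℝ) (hc : 0 < c) (hb : 0 ≤ b)
    (β : ℕ → ℝ) (hβ : ∀ n, 0 ≤ β n) (h0 : β 0 = 1)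
    (hHolder : ∀ n, 1 ≤ n → β n ≤ Real.sqrt (β (n + 1)) * Real.sqrt (β (n - 1)))
    (hLyap : ∀ n, 1 ≤ n → β (n + 1) ≤ ((n : ℝ) ^ 2 / c) * β (n - 1) + (b / c) * β n) :
    ∀ n, 1 ≤ n → β n ≤ (b / c + (n : ℝ) / Real.sqrt c) * β (n - 1) := by
  intro n hn
  have hs : 0 < Real.sqrt c := Real.sqrt_pos.mpr hc
  have hsc : Real.sqrt c ^ 2 = c := Real.sq_sqrt hc.le
  have hb1 : 0 ≤ β (n + 1) := hβ _
  have hb2 : 0 ≤ β (n - 1) := hβ _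
  have hbn : 0 ≤ β n := hβ _
  have hn1 : (1 : ℝ) ≤ (n : ℝ) := by exact_mod_cast hn
  have hsq : β n ^ 2 ≤ β (n + 1) * β (n - 1) := by
    have h1 := hHolder n hn
    have h2 : (Real.sqrt (β (n + 1)) * Real.sqrt (β (n - 1))) ^ 2
        = β (n + 1) * β (n - 1) := by
      rw [mul_pow, Real.sq_sqrt hb1, Real.sq_sqrt hb2]
    calc β n ^ 2 ≤ (Real.sqrt (β (n + 1)) * Real.sqrt (β (n - 1))) ^ 2 :=
          pow_le_pow_left₀ hbn h1 2
      _ = β (n + 1) * β (n - 1) := h2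
  have hquad : β n ^ 2 ≤ ((n : ℝ) ^ 2 / c) * β (n - 1) ^ 2
      + (b / c) * β n * β (n - 1) := by
    have h2 := hLyap n hn
    nlinarith [mul_le_mul_of_nonneg_right h2 hb2]
  by_contra hcon
  push_neg at hcon
  have hs2 : ((n : ℝ) / Real.sqrt c) ^ 2 = (n : ℝ) ^ 2 / c := by
    rw [div_pow, hsc]
  have hsn : 0 ≤ (n : ℝ) / Real.sqrt c := by positivity
  have hbnpos : 0 < β n := lt_of_le_of_lt (by positivity) hcon
  nlinarith [mul_lt_mul_of_pos_right hcon hbnpos,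
    mul_le_mul_of_nonneg_left hcon.le (mul_nonneg hsn hb2),
    mul_nonneg (mul_nonneg (div_nonneg hb hc.le) hb2) hbnpos.le,
    mul_nonneg (mul_nonneg (div_nonneg hb hc.le) hsn) (sq_nonneg (β (n - 1)))]
end

section
/- Let m ≥ 1. Then sup over t ∈ (0, 4/(27m)) of t·(m − 4(m−1)/(4 − 27t)) equals (4/27)(√m − √(m−1))², and consequently the supremum of √(t(m − 4(m−1)/(4−27t))/m) equals 2(√m − √(m−1))/(3√(3m)). -/
theorem sharp_delta_sup (m : ℕ) (hm : 1 ≤ m) :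
    sSup ((fun t : ℝ => t * ((m : ℝ) - 4 * ((m : ℝ) - 1) / (4 - 27 * t))) ''
        Set.Ioo 0 (4 / (27 * (m : ℝ))))
      = (4 / 27) * (Real.sqrt m - Real.sqrt ((m : ℝ) - 1)) ^ 2 ∧
    sSup ((fun t : ℝ =>
          Real.sqrt (t * ((m : ℝ) - 4 * ((m : ℝ) - 1) / (4 - 27 * t)) / m)) ''
        Set.Ioo 0 (4 / (27 * (m : ℝ))))
      = 2 * (Real.sqrt m - Real.sqrt ((m : ℝ) - 1)) / (3 * Real.sqrt (3 * m)) := by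
  rcases eq_or_lt_of_le hm with h1 | hm2
  · -- case m = 1
    subst h1
    constructor
    · norm_num
    · norm_num [Real.sqrt_one]
      rw [show ((fun t : ℝ => Real.sqrt t) '' Set.Ioo 0 (4/27)) =
          Real.sqrt '' Set.Ioo 0 (4/27) from rfl,
        ← Monotone.map_csSup_of_continuousAt (Real.continuous_sqrt.continuousAt)
          (fun a b h => Real.sqrt_le_sqrt h) ⟨2/27, by norm_num⟩ bddAbove_Ioo]
      rw [csSup_Ioo (by norm_num)]
      rw [show (4:ℝ)/27 = (2/(3*Real.sqrt 3))^2 by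
        have h3 : (Real.sqrt 3)^2 = 3 := Real.sq_sqrt (by norm_num)
        field_simp
        nlinarith [h3]]
      rw [Real.sqrt_sq (by positivity)]
  · -- case 2 ≤ m
    set M : ℝ := (m : ℝ) with hMdef
    have hm2' : (2:ℕ) ≤ m := hm2
    have hM : (2:ℝ) ≤ M := by rw [hMdef]; exact_mod_cast hm2'
    set s : ℝ := Real.sqrt M with hsdef
    set r : ℝ := Real.sqrt (M - 1) with hrdef
    have hs2 : s ^ 2 = M := Real.sq_sqrt (by linarith)
    have hr2 : r ^ 2 = M - 1 := Real.sq_sqrt (by linarith)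
    have hs0 : 0 < s := Real.sqrt_pos.2 (by linarith)
    have hr0 : 0 < r := Real.sqrt_pos.2 (by linarith)
    have hsr : r < s := by nlinarith
    have hub : ∀ t ∈ Set.Ioo (0:ℝ) (4 / (27 * M)),
        t * (M - 4 * (M - 1) / (4 - 27 * t)) ≤ (4/27) * (s - r)^2 := by
      rintro t ⟨ht0, ht1⟩
      rw [lt_div_iff₀ (by linarith : (0:ℝ) < 27 * M)] at ht1
      have hd : 0 < 4 - 27 * t := by nlinarith
      have heq : t * (M - 4 * (M - 1) / (4 - 27 * t)) =
          (t * M * (4 - 27 * t) - 4 * t * (M - 1)) / (4 - 27 * t) := by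
        rw [eq_div_iff hd.ne', mul_assoc, sub_mul, div_mul_cancel₀ _ hd.ne']; ring
      rw [heq, div_le_iff₀ hd, ← hs2, show s ^ 2 - 1 = r ^ 2 by nlinarith]
      nlinarith [sq_nonneg (s * (4 - 27 * t) - 4 * r)]
    set t₀ : ℝ := 4 * (s - r) / (27 * s) with ht₀def
    have hmem : t₀ ∈ Set.Ioo (0:ℝ) (4 / (27 * M)) := by
      constructor
      · apply div_pos (by linarith) (by linarith)
      · rw [div_lt_div_iff₀ (by linarith) (by linarith), ← hs2]
        nlinarith [mul_pos hr0 (sub_pos.2 hsr), mul_pos (mul_pos hr0 hr0) (sub_pos.2 hsr)]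
    have hval : t₀ * (M - 4 * (M - 1) / (4 - 27 * t₀)) = (4/27) * (s - r)^2 := by
      have hd0 : 4 - 27 * t₀ = 4 * r / s := by
        rw [ht₀def]; field_simp; ring
      rw [hd0, ← hs2]
      have hr2' : s ^ 2 - 1 = r ^ 2 := by nlinarith
      rw [hr2', ht₀def]
      have hsne := hs0.ne'
      have hrne := hr0.ne'
      field_simp
    have hfirst : sSup ((fun t : ℝ => t * (M - 4 * (M - 1) / (4 - 27 * t))) ''
        Set.Ioo 0 (4 / (27 * M))) = (4/27) * (s - r)^2 := by
      apply IsGreatest.csSup_eq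
      constructor
      · exact ⟨t₀, hmem, hval⟩
      · rintro y ⟨t, ht, rfl⟩
        exact hub t ht
    refine ⟨hfirst, ?_⟩
    set v : ℝ := 2 * (s - r) / (3 * Real.sqrt (3 * M)) with hvdef
    have h3M : Real.sqrt (3 * M) ^ 2 = 3 * M := Real.sq_sqrt (by linarith)
    have h3M0 : 0 < Real.sqrt (3 * M) := Real.sqrt_pos.2 (by linarith)
    have hv0 : 0 ≤ v := by
      apply div_nonneg (by linarith) (by positivity)
    have hcM : ((4:ℝ)/27) * (s - r)^2 / M = v ^ 2 := by
      rw [hvdef, div_pow, mul_pow, mul_pow, h3M]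
      field_simp
      ring
    have hsc : Real.sqrt ((4:ℝ)/27 * (s - r)^2 / M) = v := by
      rw [hcM, Real.sqrt_sq hv0]
    apply IsGreatest.csSup_eq
    constructor
    · refine ⟨t₀, hmem, ?_⟩
      show Real.sqrt (t₀ * (M - 4 * (M - 1) / (4 - 27 * t₀)) / M) = v
      rw [hval, hsc]
    · rintro y ⟨t, ht, rfl⟩
      show Real.sqrt (t * (M - 4 * (M - 1) / (4 - 27 * t)) / M) ≤ v
      rw [← hsc]
      apply Real.sqrt_le_sqrt
      rw [div_le_div_iff_of_pos_right (by linarith : (0:ℝ) < M)]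
      exact hub t ht
end

section
/- Let λ'₁ > 0, λ'₂ ≥ 0 and let (β_n)_{n≥0} be nonnegative reals with β_0 = 1 satisfying β_n ≤ β_{n+1}^{1/2} β_{n-1}^{1/2} and β_{n+1} ≤ λ'₁ (n+1)² β_{n-1} + λ'₂ β_n for all n ≥ 1. Then β_n ≤ (λ'₂ + √λ'₁ (n+1)) β_{n-1} for all n ≥ 1, and for every γ > √λ'₁ there exists C > 0 with β_n ≤ C γⁿ n! for all n. -/
theorem gozlan_moment_recursion (l₁ l₂ : ℝ) (hl₁ : 0 < l₁) (hl₂ : 0 ≤ l₂)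
    (β : ℕ → ℝ) (hβ : ∀ n, 0 ≤ β n) (h0 : β 0 = 1)
    (hHolder : ∀ n, 1 ≤ n → β n ≤ Real.sqrt (β (n + 1)) * Real.sqrt (β (n - 1)))
    (hrec : ∀ n, 1 ≤ n → β (n + 1) ≤ l₁ * ((n : ℝ) + 1) ^ 2 * β (n - 1) + l₂ * β n) :
    (∀ n, 1 ≤ n → β n ≤ (l₂ + Real.sqrt l₁ * ((n : ℝ) + 1)) * β (n - 1)) ∧
    ∀ γ : ℝ, Real.sqrt l₁ < γ →
      ∃ C : ℝ, 0 < C ∧ ∀ n : ℕ, β n ≤ C * γ ^ n * (n.factorial : ℝ) := by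
  have hs0 : 0 < Real.sqrt l₁ := Real.sqrt_pos.mpr hl₁
  have hs2 : Real.sqrt l₁ ^ 2 = l₁ := Real.sq_sqrt hl₁.le
  set s := Real.sqrt l₁ with hs_def
  have main : ∀ n, 1 ≤ n → β n ≤ (l₂ + s * ((n : ℝ) + 1)) * β (n - 1) := by
    intro n hn
    have h1 := hHolder n hn
    have h2 := hrec n hn
    have hb := hβ (n - 1)
    have hbn := hβ n
    have hbn1 := hβ (n + 1)
    have hn1 : (0:ℝ) ≤ (n : ℝ) + 1 := by positivity
    have hsq : β n ^ 2 ≤ β (n + 1) * β (n - 1) := by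
      calc β n ^ 2 ≤ (Real.sqrt (β (n + 1)) * Real.sqrt (β (n - 1))) ^ 2 :=
            pow_le_pow_left₀ hbn h1 2
        _ = β (n + 1) * β (n - 1) := by
            rw [mul_pow, Real.sq_sqrt hbn1, Real.sq_sqrt hb]
    have key : β n ^ 2 ≤ l₁ * ((n:ℝ) + 1) ^ 2 * β (n - 1) ^ 2 + l₂ * β n * β (n - 1) := by
      nlinarith [mul_le_mul_of_nonneg_right h2 hb]
    rw [← hs2] at key
    by_contra hcon
    push_neg at hcon
    have hM : 0 ≤ (l₂ + s * ((n:ℝ) + 1)) * β (n - 1) := by positivity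
    have hx : 0 < β n := lt_of_le_of_lt hM hcon
    have hsum : 0 < β n + s * ((n:ℝ) + 1) * β (n - 1) := by positivity
    nlinarith [mul_pos (sub_pos.mpr hcon) hsum,
      mul_nonneg (mul_nonneg hl₂ (mul_nonneg hs0.le hn1)) (sq_nonneg (β (n-1)))]
  refine ⟨main, ?_⟩
  intro γ hγ
  have hγ0 : 0 < γ := hs0.trans hγ
  have hgs : 0 < γ - s := sub_pos.mpr hγ
  set N : ℕ := max (⌈(l₂ + s) / (γ - s)⌉₊) 1 with hN
  have hN1 : 1 ≤ N := le_max_right _ _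
  have hstep : ∀ n, N ≤ n → β (n + 1) ≤ γ * ((n:ℝ) + 1) * β n := by
    intro n hn
    have h := main (n + 1) (by omega)
    simp only [Nat.add_sub_cancel] at h
    have hdiv : (l₂ + s) / (γ - s) ≤ (n : ℝ) := by
      calc (l₂ + s) / (γ - s) ≤ (⌈(l₂ + s) / (γ - s)⌉₊ : ℝ) := Nat.le_ceil _
        _ ≤ (n : ℝ) := by exact_mod_cast le_trans (le_max_left _ _) hn
    have h2 : l₂ + s ≤ (γ - s) * (n : ℝ) := by
      rw [div_le_iff₀ hgs] at hdiv; linarith [hdiv]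
    have h3 : l₂ + s * (((n:ℕ):ℝ) + 1 + 1) ≤ γ * ((n:ℝ) + 1) := by nlinarith
    calc β (n + 1) ≤ (l₂ + s * (((n+1:ℕ):ℝ) + 1)) * β n := h
      _ ≤ γ * ((n:ℝ) + 1) * β n := by
          apply mul_le_mul_of_nonneg_right _ (hβ n)
          push_cast
          push_cast at h3
          linarith
  set C : ℝ := (∑ k ∈ Finset.range (N + 1), β k / (γ ^ k * (k.factorial : ℝ))) + 1 with hC
  have hsumnn : 0 ≤ ∑ k ∈ Finset.range (N + 1), β k / (γ ^ k * (k.factorial : ℝ)) :=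
    Finset.sum_nonneg fun k _ => div_nonneg (hβ k) (by positivity)
  have hCpos : 0 < C := by rw [hC]; linarith
  refine ⟨C, hCpos, ?_⟩
  have hbase : ∀ k, k ≤ N → β k ≤ C * γ ^ k * (k.factorial : ℝ) := by
    intro k hk
    have hpos : 0 < γ ^ k * (k.factorial : ℝ) := by positivity
    have hterm : β k / (γ ^ k * (k.factorial : ℝ)) ≤ C := by
      have := Finset.single_le_sum (f := fun i => β i / (γ ^ i * (i.factorial : ℝ)))
        (s := Finset.range (N + 1)) (fun i _ => div_nonneg (hβ i) (by positivity))
        (show k ∈ Finset.range (N + 1) from Finset.mem_range.mpr (by omega))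
      rw [hC]; linarith
    calc β k = (β k / (γ ^ k * (k.factorial : ℝ))) * (γ ^ k * (k.factorial : ℝ)) :=
          (div_mul_cancel₀ _ hpos.ne').symm
      _ ≤ C * (γ ^ k * (k.factorial : ℝ)) := mul_le_mul_of_nonneg_right hterm hpos.le
      _ = C * γ ^ k * (k.factorial : ℝ) := (mul_assoc _ _ _).symm
  have hind : ∀ m, β (N + m) ≤ C * γ ^ (N + m) * ((N + m).factorial : ℝ) := by
    intro m
    induction m with
    | zero => simpa using hbase N le_rfl
    | succ m ih =>
      have h1 := hstep (N + m) (Nat.le_add_right _ _)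
      have hcoef : 0 ≤ γ * (((N + m : ℕ):ℝ) + 1) := by positivity
      calc β (N + (m + 1)) = β ((N + m) + 1) := by ring_nf
        _ ≤ γ * (((N + m : ℕ):ℝ) + 1) * β (N + m) := h1
        _ ≤ γ * (((N + m : ℕ):ℝ) + 1) * (C * γ ^ (N + m) * ((N + m).factorial : ℝ)) :=
            mul_le_mul_of_nonneg_left ih hcoef
        _ = C * γ ^ (N + (m + 1)) * ((N + (m + 1)).factorial : ℝ) := by
            have : (N + (m + 1)) = (N + m) + 1 := by omega
            rw [this, Nat.factorial_succ, pow_succ]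
            push_cast
            ring
  intro n
  rcases le_or_gt n N with h | h
  · exact hbase n h
  · obtain ⟨m, rfl⟩ : ∃ m, n = N + m := ⟨n - N, by omega⟩
    exact hind m
end

section
/- Let μ be a probability measure on ℝ^m and suppose there exist constants λ₁ > 0, λ₂ ≥ 0 and R > 0 such that for every polynomial-growth C¹ function h, ∫ h² dμ ≤ λ₁ ∫ Σ_{i=1}^m |∂_i h|²/(1+x_i²) dμ + λ₂ ∫_{B(0,R+1)} h² dμ. Then all moments β_n = ∫ |x|^{2n} dμ are finite and satisfy β_n ≤ λ₁ m n² β_{n-2} + λ₂ (R+1)² β_{n-1} for all n ≥ 2. -/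
open MeasureTheory
set_option maxHeartbeats 1000000

lemma comp_normSq_deriv {m : ℕ} (φ φ' : ℝ → ℝ) (c : ℝ) (hc : 0 < c)
    (hφ : ∀ t, -c < t → HasDerivAt φ (φ' t) t) (x : EuclideanSpace ℝ (Fin m)) :
    HasFDerivAt (fun y : EuclideanSpace ℝ (Fin m) => φ (‖y‖ ^ 2))
      (φ' (‖x‖^2) • (2 • (innerSL ℝ x))) x := by
  have h1 : HasFDerivAt (fun y : EuclideanSpace ℝ (Fin m) => ‖y‖ ^ 2)
      (2 • (innerSL ℝ x)) x := (hasStrictFDerivAt_norm_sq x).hasFDerivAt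
  have h2 : HasDerivAt φ (φ' (‖x‖^2)) (‖x‖^2) :=
    hφ _ (by nlinarith [sq_nonneg ‖x‖])
  exact h2.comp_hasFDerivAt x h1

lemma normSq_fderiv_apply {m : ℕ} (φ φ' : ℝ → ℝ) (c : ℝ) (hc : 0 < c)
    (hφ : ∀ t, -c < t → HasDerivAt φ (φ' t) t) (x : EuclideanSpace ℝ (Fin m)) (i : Fin m) :
    fderiv ℝ (fun y : EuclideanSpace ℝ (Fin m) => φ (‖y‖ ^ 2)) x (EuclideanSpace.single i 1)
      = φ' (‖x‖^2) * (2 * x i) := by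
  rw [(comp_normSq_deriv φ φ' c hc hφ x).fderiv]
  simp [EuclideanSpace.inner_single_right]

lemma comp_normSq_contDiff {m : ℕ} (φ : ℝ → ℝ) (c : ℝ) (hc : 0 < c)
    (hφ : ContDiffOn ℝ 1 φ (Set.Ioi (-c))) :
    ContDiff ℝ 1 (fun y : EuclideanSpace ℝ (Fin m) => φ (‖y‖ ^ 2)) := by
  rw [← contDiffOn_univ]
  refine hφ.comp ((contDiff_norm_sq ℝ).contDiffOn) ?_
  intro x _
  exact lt_of_lt_of_le (neg_lt_zero.2 hc) (sq_nonneg _)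

-- truncation function derivative
lemma trunc_hasDerivAt (K : ℝ) (hK : 1 ≤ K) (k : ℕ) (t : ℝ) (ht : -1 < t) :
    HasDerivAt (fun t => (K * t / (K + t)) ^ (k+1))
      ((k+1 : ℝ) * (K * t / (K + t)) ^ k * (K^2 / (K+t)^2)) t := by
  have hKt : K + t ≠ 0 := by nlinarith
  have h1 : HasDerivAt (fun t => K * t / (K + t)) (K^2 / (K+t)^2) t := by
    have := ((hasDerivAt_id t).const_mul K).div ((hasDerivAt_const t K).add (hasDerivAt_id t)) hKt
    refine this.congr_deriv ?_
    simp only [Pi.add_apply, id]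
    field_simp
    ring
  have := h1.pow (k+1)
  refine this.congr_deriv ?_
  push_cast
  ring_nf

lemma sqrtpow_hasDerivAt (ε : ℝ) (hε : 0 < ε) (n : ℕ) (hn : 2 ≤ n) (t : ℝ) (ht : -ε < t) :
    HasDerivAt (fun t => Real.sqrt (ε + t) ^ n)
      ((n : ℝ) / 2 * Real.sqrt (ε + t) ^ (n - 2)) t := by
  have hpos : 0 < ε + t := by linarith
  have hs : 0 < Real.sqrt (ε + t) := Real.sqrt_pos.2 hpos
  have h1 : HasDerivAt (fun t => Real.sqrt (ε + t)) (1 / (2 * Real.sqrt (ε + t))) t := by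
    have := (Real.hasDerivAt_sqrt (ne_of_gt hpos)).comp t ((hasDerivAt_const t ε).add (hasDerivAt_id t))
    exact this.congr_deriv (by simp)
  have := h1.pow n
  refine this.congr_deriv ?_
  have hn1 : n - 1 = (n - 2) + 1 := by omega
  rw [hn1, pow_succ]
  field_simp

lemma trunc_contDiffOn (K : ℝ) (hK : 1 ≤ K) (k : ℕ) :
    ContDiffOn ℝ 1 (fun t => (K * t / (K + t)) ^ (k+1)) (Set.Ioi (-1 : ℝ)) := by
  refine ContDiffOn.pow ?_ _
  refine ContDiffOn.div (contDiffOn_const.mul contDiffOn_id)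
    (contDiffOn_const.add contDiffOn_id) ?_
  intro t ht
  simp only [Set.mem_Ioi] at ht
  nlinarith

lemma sqrtpow_contDiffOn (ε : ℝ) (hε : 0 < ε) (n : ℕ) :
    ContDiffOn ℝ 1 (fun t => Real.sqrt (ε + t) ^ n) (Set.Ioi (-ε)) := by
  intro t ht
  simp only [Set.mem_Ioi] at ht
  have hpos : 0 < ε + t := by linarith
  exact (((Real.contDiffAt_sqrt (ne_of_gt hpos)).comp t
    (contDiffAt_const.add contDiffAt_id)).pow n).contDiffWithinAt

-- pointwise product bound used for the truncation gradient term
lemma term_bound1 (q a t b c : ℝ) (ha : 0 ≤ a) (hat : a ≤ t) (hb : 0 ≤ b) (hb1 : b ≤ 1) :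
    (q * a * b * (2 * c)) ^ 2 / (1 + c ^ 2) ≤ 4 * q ^ 2 * t ^ 2 := by
  have h1 : (0:ℝ) < 1 + c ^ 2 := by positivity
  rw [div_le_iff₀ h1]
  have ha2 : a ^ 2 ≤ t ^ 2 := by nlinarith
  have hb2 : b ^ 2 ≤ 1 := by nlinarith
  have hc2 : c ^ 2 ≤ 1 + c ^ 2 := by nlinarith
  have k1 : a ^ 2 * b ^ 2 ≤ t ^ 2 := by nlinarith [sq_nonneg a, sq_nonneg b, sq_nonneg t]
  have k2 : (a ^ 2 * b ^ 2) * c ^ 2 ≤ t ^ 2 * (1 + c ^ 2) := by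
    have := mul_le_mul k1 hc2 (sq_nonneg c) (by nlinarith [sq_nonneg t])
    linarith
  nlinarith [sq_nonneg q, mul_le_mul_of_nonneg_left k2 (sq_nonneg q)]

-- pointwise bound for the sqrt gradient term
lemma term_bound2 (q S c : ℝ) :
    ((q / 2) * S * (2 * c)) ^ 2 / (1 + c ^ 2) ≤ q ^ 2 * S ^ 2 := by
  have h1 : (0:ℝ) < 1 + c ^ 2 := by positivity
  rw [div_le_iff₀ h1]
  nlinarith [sq_nonneg (q * S), sq_nonneg (q * S * c)]

lemma integrable_one_add_sq {m : ℕ} (μ : Measure (EuclideanSpace ℝ (Fin m)))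
    [IsFiniteMeasure μ] (k : ℕ)
    (hβ : Integrable (fun x => ‖x‖ ^ (2 * k)) μ) :
    Integrable (fun x => (1 + ‖x‖ ^ 2) ^ k) μ := by
  refine Integrable.mono' ((integrable_const ((2:ℝ)^k)).add (hβ.const_mul (2^k))) ?_ ?_
  · exact ((continuous_const.add ((continuous_norm).pow 2)).pow k).aestronglyMeasurable
  · refine Filter.Eventually.of_forall fun x => ?_
    have h0 : (0:ℝ) ≤ ‖x‖ := norm_nonneg x
    rw [Real.norm_of_nonneg (by positivity)]
    rcases le_total (‖x‖^2) 1 with h | h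
    · have : (1 + ‖x‖ ^ 2) ^ k ≤ 2 ^ k := by
        apply pow_le_pow_left₀ (by positivity) (by linarith)
      have h2 : (0:ℝ) ≤ 2 ^ k * ‖x‖ ^ (2 * k) := by positivity
      simp only [Pi.add_apply]
      linarith
    · have : (1 + ‖x‖ ^ 2) ^ k ≤ (2 * ‖x‖ ^ 2) ^ k := by
        apply pow_le_pow_left₀ (by positivity) (by linarith)
      rw [mul_pow, ← pow_mul] at this
      have h2 : (0:ℝ) ≤ (2:ℝ)^k := by positivity
      simp only [Pi.add_apply]
      linarith

section Step1
variable {m : ℕ} (μ : Measure (EuclideanSpace ℝ (Fin m))) [IsProbabilityMeasure μ]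
  (l₁ l₂ R : ℝ)

lemma step1 (hl₁ : 0 < l₁) (hl₂ : 0 ≤ l₂) (hR : 0 < R)
    (hPoin : ∀ h : EuclideanSpace ℝ (Fin m) → ℝ, ContDiff ℝ 1 h →
      (∃ C : ℝ, ∃ k : ℕ, ∀ x, |h x| ≤ C * (1 + ‖x‖) ^ k) →
      ∫ x, (h x) ^ 2 ∂μ
        ≤ l₁ * ∫ x, ∑ i, (fderiv ℝ h x (EuclideanSpace.single i 1)) ^ 2 / (1 + (x i) ^ 2) ∂μ
          + l₂ * ∫ x in Metric.ball (0 : EuclideanSpace ℝ (Fin m)) (R + 1), (h x) ^ 2 ∂μ)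
    (k : ℕ) (ih : Integrable (fun x => ‖x‖ ^ (4 * k)) μ) :
    Integrable (fun x => ‖x‖ ^ (4 * k + 4)) μ := by
  -- the truncated functions
  set C : ℝ := l₁ * ((m:ℝ) * (4 * ((k:ℝ)+1)^2) * ∫ x, ‖x‖ ^ (4*k) ∂μ) + l₂ * (R+1)^(4*k+4)
    with hC
  have key : ∀ K : ℕ,
      ∫ x, ((((K:ℝ)+1) * ‖x‖^2 / (((K:ℝ)+1) + ‖x‖^2)) ^ (k+1))^2 ∂μ ≤ C := by
    intro K
    set KR : ℝ := (K:ℝ) + 1 with hKRdef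
    have hKR : 1 ≤ KR := by rw [hKRdef]; linarith [Nat.cast_nonneg (α := ℝ) K]
    have hKR0 : 0 < KR := by linarith
    set φ : ℝ → ℝ := fun t => (KR * t / (KR + t)) ^ (k+1) with hφdef
    set φ' : ℝ → ℝ := fun t => ((k:ℝ)+1) * (KR * t / (KR + t)) ^ k * (KR^2 / (KR+t)^2)
      with hφ'def
    set h : EuclideanSpace ℝ (Fin m) → ℝ := fun y => φ (‖y‖ ^ 2) with hhdef
    have hderiv : ∀ t, (-1:ℝ) < t → HasDerivAt φ (φ' t) t := by
      intro t ht
      exact trunc_hasDerivAt KR hKR k t ht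
    have hCD : ContDiff ℝ 1 h := comp_normSq_contDiff φ 1 one_pos (trunc_contDiffOn KR hKR k)
    -- basic bounds for u := KR*t/(KR+t), t ≥ 0
    have hu0 : ∀ t : ℝ, 0 ≤ t → 0 ≤ KR * t / (KR + t) := by
      intro t ht; apply div_nonneg (by positivity) (by linarith)
    have hut : ∀ t : ℝ, 0 ≤ t → KR * t / (KR + t) ≤ t := by
      intro t ht; rw [div_le_iff₀ (by linarith)]; nlinarith
    have huK : ∀ t : ℝ, 0 ≤ t → KR * t / (KR + t) ≤ KR := by
      intro t ht; rw [div_le_iff₀ (by linarith)]; nlinarith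
    -- growth
    have hgrow : ∀ x : EuclideanSpace ℝ (Fin m), |h x| ≤ KR^(k+1) * (1 + ‖x‖)^0 := by
      intro x
      have h1 := hu0 (‖x‖^2) (by positivity)
      have h2 := huK (‖x‖^2) (by positivity)
      rw [pow_zero, mul_one, hhdef]
      simp only [hφdef]
      rw [abs_of_nonneg (by positivity)]
      exact pow_le_pow_left₀ h1 h2 _
    have key0 := hPoin h hCD ⟨KR^(k+1), 0, hgrow⟩
    -- the fderiv formula
    have hfd : ∀ (x : EuclideanSpace ℝ (Fin m)) (i : Fin m),
        fderiv ℝ h x (EuclideanSpace.single i 1) = φ' (‖x‖^2) * (2 * x i) :=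
      normSq_fderiv_apply φ φ' 1 one_pos hderiv
    -- pointwise bound on the gradient sum
    have hsum : ∀ x : EuclideanSpace ℝ (Fin m),
        (∑ i, (fderiv ℝ h x (EuclideanSpace.single i 1)) ^ 2 / (1 + (x i) ^ 2))
          ≤ (m:ℝ) * (4 * ((k:ℝ)+1)^2 * ‖x‖^(4*k)) := by
      intro x
      have hxx : (0:ℝ) ≤ ‖x‖^2 := by positivity
      have hterm : ∀ i : Fin m,
          (fderiv ℝ h x (EuclideanSpace.single i 1)) ^ 2 / (1 + (x i) ^ 2)
            ≤ 4 * ((k:ℝ)+1)^2 * ‖x‖^(4*k) := by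
        intro i
        rw [hfd x i]
        have hb0 : 0 ≤ KR^2 / (KR + ‖x‖^2)^2 := by positivity
        have hb1 : KR^2 / (KR + ‖x‖^2)^2 ≤ 1 := by
          rw [div_le_one (by positivity)]
          nlinarith
        have ha0 : 0 ≤ (KR * ‖x‖^2 / (KR + ‖x‖^2)) ^ k := pow_nonneg (hu0 _ hxx) k
        have hat : (KR * ‖x‖^2 / (KR + ‖x‖^2)) ^ k ≤ (‖x‖^2)^k :=
          pow_le_pow_left₀ (hu0 _ hxx) (hut _ hxx) k
        have := term_bound1 ((k:ℝ)+1) ((KR * ‖x‖^2 / (KR + ‖x‖^2)) ^ k) ((‖x‖^2)^k)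
          (KR^2 / (KR + ‖x‖^2)^2) (x i) ha0 hat hb0 hb1
        have hpow : (((‖x‖^2)^k))^2 = ‖x‖^(4*k) := by
          rw [← pow_mul, ← pow_mul]; congr 1; ring
        rw [hpow] at this
        calc (φ' (‖x‖^2) * (2 * x i)) ^ 2 / (1 + (x i) ^ 2)
            = (((k:ℝ)+1) * (KR * ‖x‖^2 / (KR + ‖x‖^2)) ^ k * (KR^2 / (KR + ‖x‖^2)^2)
                * (2 * x i)) ^ 2 / (1 + (x i) ^ 2) := by rw [hφ'def]
          _ ≤ 4 * ((k:ℝ)+1)^2 * ‖x‖^(4*k) := this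
      calc (∑ i, (fderiv ℝ h x (EuclideanSpace.single i 1)) ^ 2 / (1 + (x i) ^ 2))
          ≤ ∑ _i : Fin m, 4 * ((k:ℝ)+1)^2 * ‖x‖^(4*k) :=
            Finset.sum_le_sum (fun i _ => hterm i)
        _ = (m:ℝ) * (4 * ((k:ℝ)+1)^2 * ‖x‖^(4*k)) := by
            rw [Finset.sum_const, Finset.card_univ, Fintype.card_fin, nsmul_eq_mul]
    -- integrability of the gradient sum
    have hGmeas : Continuous (fun x : EuclideanSpace ℝ (Fin m) =>
        ∑ i, (φ' (‖x‖^2) * (2 * x i)) ^ 2 / (1 + (x i) ^ 2)) := by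
      apply continuous_finset_sum
      intro i _
      apply Continuous.div
      · apply Continuous.pow
        apply Continuous.mul
        · simp only [hφ'def]
          apply Continuous.mul
          · apply Continuous.mul continuous_const
            apply Continuous.pow
            apply Continuous.div
            · exact continuous_const.mul ((continuous_norm).pow 2)
            · exact continuous_const.add ((continuous_norm).pow 2)
            · intro x; positivity
          · apply Continuous.div continuous_const
            · exact (continuous_const.add ((continuous_norm).pow 2)).pow 2
            · intro x; positivity
        · exact continuous_const.mul (EuclideanSpace.proj i).continuous
      · exact continuous_const.add ((EuclideanSpace.proj i).continuous.pow 2)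
      · intro x; positivity
    have hGint : Integrable (fun x =>
        ∑ i, (fderiv ℝ h x (EuclideanSpace.single i 1)) ^ 2 / (1 + (x i) ^ 2)) μ := by
      have : (fun x => ∑ i, (fderiv ℝ h x (EuclideanSpace.single i 1)) ^ 2 / (1 + (x i) ^ 2))
          = fun x => ∑ i, (φ' (‖x‖^2) * (2 * x i)) ^ 2 / (1 + (x i) ^ 2) := by
        funext x; exact Finset.sum_congr rfl (fun i _ => by rw [hfd x i])
      rw [this]
      refine Integrable.mono' (ih.const_mul ((m:ℝ) * (4 * ((k:ℝ)+1)^2)))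
        hGmeas.aestronglyMeasurable ?_
      · refine Filter.Eventually.of_forall fun x => ?_
        have h1 := hsum x
        have h2 : (0:ℝ) ≤ ∑ i, (φ' (‖x‖^2) * (2 * x i)) ^ 2 / (1 + (x i) ^ 2) := by
          apply Finset.sum_nonneg; intro i _; positivity
        rw [Real.norm_of_nonneg h2]
        have heq : ∑ i, (φ' (‖x‖^2) * (2 * x i)) ^ 2 / (1 + (x i) ^ 2)
            = ∑ i, (fderiv ℝ h x (EuclideanSpace.single i 1)) ^ 2 / (1 + (x i) ^ 2) :=
          Finset.sum_congr rfl (fun i _ => by rw [hfd x i])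
        rw [heq]
        calc ∑ i, (fderiv ℝ h x (EuclideanSpace.single i 1)) ^ 2 / (1 + (x i) ^ 2)
            ≤ (m:ℝ) * (4 * ((k:ℝ)+1)^2 * ‖x‖^(4*k)) := h1
          _ = (m:ℝ) * (4 * ((k:ℝ)+1)^2) * ‖x‖^(4*k) := by ring
    -- gradient integral bound
    have hgradInt : ∫ x, ∑ i, (fderiv ℝ h x (EuclideanSpace.single i 1)) ^ 2 / (1 + (x i)^2) ∂μ
        ≤ (m:ℝ) * (4 * ((k:ℝ)+1)^2) * ∫ x, ‖x‖^(4*k) ∂μ := by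
      calc ∫ x, ∑ i, (fderiv ℝ h x (EuclideanSpace.single i 1)) ^ 2 / (1 + (x i)^2) ∂μ
          ≤ ∫ x, (m:ℝ) * (4 * ((k:ℝ)+1)^2) * ‖x‖^(4*k) ∂μ := by
            refine integral_mono hGint (ih.const_mul _) (fun x => ?_)
            exact (hsum x).trans (le_of_eq (by ring))
        _ = (m:ℝ) * (4 * ((k:ℝ)+1)^2) * ∫ x, ‖x‖^(4*k) ∂μ := integral_const_mul _ _
    -- pointwise bound for h^2
    have hh2le : ∀ x : EuclideanSpace ℝ (Fin m), (h x)^2 ≤ ‖x‖^(4*k+4) := by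
      intro x
      have hxx : (0:ℝ) ≤ ‖x‖^2 := by positivity
      have e1 : (h x)^2 = (KR * ‖x‖^2 / (KR + ‖x‖^2))^((k+1)*2) := by
        rw [hhdef]; simp only [hφdef]; rw [← pow_mul]
      have e2 : ((‖x‖^2))^((k+1)*2) = ‖x‖^(4*k+4) := by
        rw [← pow_mul]; congr 1; ring
      rw [e1, ← e2]
      exact pow_le_pow_left₀ (hu0 _ hxx) (hut _ hxx) _
    -- integrability of h^2
    have hh2int : Integrable (fun x => (h x)^2) μ := by
      refine Integrable.mono' (integrable_const ((KR^(k+1))^2))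
        ((hCD.continuous.pow 2).aestronglyMeasurable)
        (Filter.Eventually.of_forall fun x => ?_)
      have hxx : (0:ℝ) ≤ ‖x‖^2 := by positivity
      have h1 : 0 ≤ h x := by
        rw [hhdef]; simp only [hφdef]; exact pow_nonneg (hu0 _ hxx) _
      have h2 : h x ≤ KR^(k+1) := by
        rw [hhdef]; simp only [hφdef]; exact pow_le_pow_left₀ (hu0 _ hxx) (huK _ hxx) _
      rw [Real.norm_of_nonneg (by positivity)]
      exact pow_le_pow_left₀ h1 h2 2
    -- ball term bound
    have hball : ∫ x in Metric.ball (0 : EuclideanSpace ℝ (Fin m)) (R+1), (h x)^2 ∂μ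
        ≤ (R+1)^(4*k+4) := by
      have hR1 : (0:ℝ) < R + 1 := by linarith
      calc ∫ x in Metric.ball (0 : EuclideanSpace ℝ (Fin m)) (R+1), (h x)^2 ∂μ
          ≤ ∫ _x in Metric.ball (0 : EuclideanSpace ℝ (Fin m)) (R+1), (R+1)^(4*k+4) ∂μ := by
            refine setIntegral_mono_on hh2int.integrableOn
              (integrableOn_const (measure_ne_top _ _)) measurableSet_ball
              (fun x hx => ?_)
            refine (hh2le x).trans ?_
            exact pow_le_pow_left₀ (norm_nonneg x) (le_of_lt (mem_ball_zero_iff.1 hx)) _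
        _ = (μ (Metric.ball (0 : EuclideanSpace ℝ (Fin m)) (R+1))).toReal * (R+1)^(4*k+4) := by
            rw [setIntegral_const, smul_eq_mul, measureReal_def]
        _ ≤ 1 * (R+1)^(4*k+4) := by
            refine mul_le_mul_of_nonneg_right ?_ (by positivity)
            have := prob_le_one (μ := μ) (s := Metric.ball (0 : EuclideanSpace ℝ (Fin m)) (R+1))
            calc (μ (Metric.ball (0 : EuclideanSpace ℝ (Fin m)) (R+1))).toReal
                ≤ (1 : ENNReal).toReal := ENNReal.toReal_mono (by simp) this
              _ = 1 := by simp
        _ = (R+1)^(4*k+4) := one_mul _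
    show ∫ x, (h x)^2 ∂μ ≤ C
    calc ∫ x, (h x)^2 ∂μ
        ≤ l₁ * ∫ x, ∑ i, (fderiv ℝ h x (EuclideanSpace.single i 1)) ^ 2 / (1 + (x i)^2) ∂μ
          + l₂ * ∫ x in Metric.ball (0 : EuclideanSpace ℝ (Fin m)) (R+1), (h x)^2 ∂μ := key0
      _ ≤ C := by
          rw [hC]
          exact add_le_add (mul_le_mul_of_nonneg_left hgradInt hl₁.le)
            (mul_le_mul_of_nonneg_left hball hl₂)
  -- Fatou argument
  have hcont : ∀ K : ℕ, Continuous (fun x : EuclideanSpace ℝ (Fin m) =>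
      ((((K:ℝ)+1) * ‖x‖^2 / (((K:ℝ)+1) + ‖x‖^2)) ^ (k+1))^2) := by
    intro K
    have hK0 : (0:ℝ) < (K:ℝ)+1 := by positivity
    refine Continuous.pow (Continuous.pow ?_ _) 2
    refine Continuous.div (continuous_const.mul ((continuous_norm).pow 2))
      (continuous_const.add ((continuous_norm).pow 2)) (fun x => by positivity)
  have hint : ∀ K : ℕ, Integrable (fun x : EuclideanSpace ℝ (Fin m) =>
      ((((K:ℝ)+1) * ‖x‖^2 / (((K:ℝ)+1) + ‖x‖^2)) ^ (k+1))^2) μ := by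
    intro K
    have hK0 : (0:ℝ) < (K:ℝ)+1 := by positivity
    refine Integrable.mono' (integrable_const (((((K:ℝ)+1))^(k+1))^2))
      (hcont K).aestronglyMeasurable (Filter.Eventually.of_forall fun x => ?_)
    have hxx : (0:ℝ) ≤ ‖x‖^2 := by positivity
    have hu0 : 0 ≤ ((K:ℝ)+1) * ‖x‖^2 / (((K:ℝ)+1) + ‖x‖^2) := by positivity
    have huK : ((K:ℝ)+1) * ‖x‖^2 / (((K:ℝ)+1) + ‖x‖^2) ≤ (K:ℝ)+1 := by
      rw [div_le_iff₀ (by positivity)]; nlinarith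
    rw [Real.norm_of_nonneg (by positivity)]
    exact pow_le_pow_left₀ (pow_nonneg hu0 _) (pow_le_pow_left₀ hu0 huK _) 2
  have hptw : ∀ x : EuclideanSpace ℝ (Fin m), Filter.Tendsto (fun K : ℕ =>
      ((((K:ℝ)+1) * ‖x‖^2 / (((K:ℝ)+1) + ‖x‖^2)) ^ (k+1))^2) Filter.atTop
      (nhds (‖x‖^(4*k+4))) := by
    intro x
    have ht : (0:ℝ) ≤ ‖x‖^2 := by positivity
    have hd : Filter.Tendsto (fun K : ℕ => ((K:ℝ)+1) + ‖x‖^2) Filter.atTop Filter.atTop := by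
      apply Filter.tendsto_atTop_add_const_right
      apply Filter.tendsto_atTop_add_const_right
      exact tendsto_natCast_atTop_atTop
    have h0 : Filter.Tendsto (fun K : ℕ => (‖x‖^2)^2 / (((K:ℝ)+1) + ‖x‖^2)) Filter.atTop
        (nhds 0) := Filter.Tendsto.div_atTop tendsto_const_nhds hd
    have h1 : Filter.Tendsto (fun K : ℕ => ((K:ℝ)+1) * ‖x‖^2 / (((K:ℝ)+1) + ‖x‖^2))
        Filter.atTop (nhds (‖x‖^2)) := by
      have heq : ∀ K : ℕ, ‖x‖^2 - (‖x‖^2)^2 / (((K:ℝ)+1) + ‖x‖^2)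
          = ((K:ℝ)+1) * ‖x‖^2 / (((K:ℝ)+1) + ‖x‖^2) := by
        intro K
        have hpos : (0:ℝ) < ((K:ℝ)+1) + ‖x‖^2 := by positivity
        field_simp
        ring
      have h2 := Filter.Tendsto.sub (tendsto_const_nhds (x := ‖x‖^2) (f := Filter.atTop)) h0
      rw [sub_zero] at h2
      exact h2.congr heq
    have h2 := h1.pow ((k+1)*2)
    have e2 : ((‖x‖^2))^((k+1)*2) = ‖x‖^(4*k+4) := by
      rw [← pow_mul]; congr 1; ring
    rw [e2] at h2
    refine h2.congr (fun K => ?_)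
    rw [← pow_mul]
  -- lintegral bounds
  have hlin : ∀ K : ℕ, ∫⁻ x, ENNReal.ofReal
      (((((K:ℝ)+1) * ‖x‖^2 / (((K:ℝ)+1) + ‖x‖^2)) ^ (k+1))^2) ∂μ ≤ ENNReal.ofReal C := by
    intro K
    rw [← ofReal_integral_eq_lintegral_ofReal (hint K)
      (Filter.Eventually.of_forall fun x => by positivity)]
    exact ENNReal.ofReal_le_ofReal (key K)
  have hmeas : ∀ K : ℕ, Measurable (fun x : EuclideanSpace ℝ (Fin m) => ENNReal.ofReal
      (((((K:ℝ)+1) * ‖x‖^2 / (((K:ℝ)+1) + ‖x‖^2)) ^ (k+1))^2)) := fun K =>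
    ENNReal.measurable_ofReal.comp (hcont K).measurable
  have hfin : ∫⁻ x, ENNReal.ofReal (‖x‖^(4*k+4)) ∂μ ≤ ENNReal.ofReal C := by
    have hcongr : ∫⁻ x, ENNReal.ofReal (‖x‖^(4*k+4)) ∂μ
        = ∫⁻ x, Filter.liminf (fun K : ℕ => ENNReal.ofReal
          (((((K:ℝ)+1) * ‖x‖^2 / (((K:ℝ)+1) + ‖x‖^2)) ^ (k+1))^2)) Filter.atTop ∂μ := by
      refine lintegral_congr (fun x => ?_)
      exact (((ENNReal.continuous_ofReal.tendsto _).comp (hptw x)).liminf_eq).symm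
    rw [hcongr]
    refine (lintegral_liminf_le hmeas).trans ?_
    refine (Filter.liminf_le_liminf (Filter.Eventually.of_forall hlin)).trans ?_
    simp [Filter.liminf_const]
  refine ⟨((continuous_norm.pow (4*k+4))).aestronglyMeasurable, ?_⟩
  rw [hasFiniteIntegral_iff_ofReal (Filter.Eventually.of_forall fun x => by positivity)]
  exact lt_of_le_of_lt hfin ENNReal.ofReal_lt_top

end Step1


section Step2
variable {m : ℕ} (μ : Measure (EuclideanSpace ℝ (Fin m))) [IsProbabilityMeasure μ]
  (l₁ l₂ R : ℝ)

lemma step2 (hl₁ : 0 < l₁) (hl₂ : 0 ≤ l₂) (hR : 0 < R)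
    (hPoin : ∀ h : EuclideanSpace ℝ (Fin m) → ℝ, ContDiff ℝ 1 h →
      (∃ C : ℝ, ∃ k : ℕ, ∀ x, |h x| ≤ C * (1 + ‖x‖) ^ k) →
      ∫ x, (h x) ^ 2 ∂μ
        ≤ l₁ * ∫ x, ∑ i, (fderiv ℝ h x (EuclideanSpace.single i 1)) ^ 2 / (1 + (x i) ^ 2) ∂μ
          + l₂ * ∫ x in Metric.ball (0 : EuclideanSpace ℝ (Fin m)) (R + 1), (h x) ^ 2 ∂μ)
    (hA : ∀ p : ℕ, Integrable (fun x => ‖x‖ ^ (2 * p)) μ)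
    (n : ℕ) (hn : 2 ≤ n) :
    ∫ x, ‖x‖ ^ (2 * n) ∂μ
      ≤ l₁ * m * (n : ℝ) ^ 2 * ∫ x, ‖x‖ ^ (2 * (n - 2)) ∂μ
        + l₂ * (R + 1) ^ 2 * ∫ x, ‖x‖ ^ (2 * (n - 1)) ∂μ := by
  -- integrability of the comparison functions
  have hIone : ∀ p : ℕ, Integrable (fun x : EuclideanSpace ℝ (Fin m) => (1 + ‖x‖^2)^p) μ :=
    fun p => integrable_one_add_sq μ p (hA p)
  have hIε : ∀ ε : ℝ, 0 < ε → ε ≤ 1 → ∀ p : ℕ,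
      Integrable (fun x : EuclideanSpace ℝ (Fin m) => (ε + ‖x‖^2)^p) μ := by
    intro ε hε hε1 p
    refine Integrable.mono' (hIone p)
      (((continuous_const.add ((continuous_norm).pow 2)).pow p).aestronglyMeasurable)
      (Filter.Eventually.of_forall fun x => ?_)
    rw [Real.norm_of_nonneg (by positivity)]
    exact pow_le_pow_left₀ (by positivity) (by nlinarith [sq_nonneg ‖x‖]) _
  -- the key inequality for each ε = 1/(j+1)
  have key : ∀ j : ℕ,
      ∫ x, ‖x‖ ^ (2 * n) ∂μ
        ≤ l₁ * ((m:ℝ) * (n:ℝ)^2 * ∫ x, (1/((j:ℝ)+1) + ‖x‖^2)^(n-2) ∂μ)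
          + l₂ * ∫ x in Metric.ball (0 : EuclideanSpace ℝ (Fin m)) (R + 1),
              (1/((j:ℝ)+1) + ‖x‖^2)^n ∂μ := by
    intro j
    set ε : ℝ := 1/((j:ℝ)+1) with hεdef
    have hε : 0 < ε := by rw [hεdef]; positivity
    have hε1 : ε ≤ 1 := by
      rw [hεdef, div_le_one (by positivity)]
      linarith [Nat.cast_nonneg (α := ℝ) j]
    set φ : ℝ → ℝ := fun t => Real.sqrt (ε + t) ^ n with hφdef
    set φ' : ℝ → ℝ := fun t => (n:ℝ)/2 * Real.sqrt (ε + t) ^ (n-2) with hφ'def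
    set h : EuclideanSpace ℝ (Fin m) → ℝ := fun y => φ (‖y‖ ^ 2) with hhdef
    have hderiv : ∀ t, -ε < t → HasDerivAt φ (φ' t) t :=
      fun t ht => sqrtpow_hasDerivAt ε hε n hn t ht
    have hCD : ContDiff ℝ 1 h := comp_normSq_contDiff φ ε hε (sqrtpow_contDiffOn ε hε n)
    have hgrow : ∀ x : EuclideanSpace ℝ (Fin m), |h x| ≤ 1 * (1 + ‖x‖)^n := by
      intro x
      have h1 : Real.sqrt (ε + ‖x‖^2) ≤ 1 + ‖x‖ := by
        rw [show (1:ℝ) + ‖x‖ = Real.sqrt ((1 + ‖x‖)^2) by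
          rw [Real.sqrt_sq (by positivity)]]
        apply Real.sqrt_le_sqrt
        nlinarith [norm_nonneg x]
      rw [one_mul, hhdef]
      simp only [hφdef]
      rw [abs_of_nonneg (by positivity)]
      exact pow_le_pow_left₀ (Real.sqrt_nonneg _) h1 _
    have key0 := hPoin h hCD ⟨1, n, hgrow⟩
    -- h^2 = (ε + ‖x‖^2)^n
    have hsq : ∀ x : EuclideanSpace ℝ (Fin m), (h x)^2 = (ε + ‖x‖^2)^n := by
      intro x
      rw [hhdef]; simp only [hφdef]
      rw [← pow_mul, mul_comm n 2, pow_mul, Real.sq_sqrt (by positivity)]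
    have hfd : ∀ (x : EuclideanSpace ℝ (Fin m)) (i : Fin m),
        fderiv ℝ h x (EuclideanSpace.single i 1) = φ' (‖x‖^2) * (2 * x i) :=
      normSq_fderiv_apply φ φ' ε hε hderiv
    -- pointwise gradient bound
    have hS2 : ∀ x : EuclideanSpace ℝ (Fin m),
        (Real.sqrt (ε + ‖x‖^2) ^ (n-2))^2 = (ε + ‖x‖^2)^(n-2) := by
      intro x
      rw [← pow_mul, mul_comm (n-2) 2, pow_mul, Real.sq_sqrt (by positivity)]
    have hsum : ∀ x : EuclideanSpace ℝ (Fin m),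
        (∑ i, (fderiv ℝ h x (EuclideanSpace.single i 1)) ^ 2 / (1 + (x i) ^ 2))
          ≤ (m:ℝ) * ((n:ℝ)^2 * (ε + ‖x‖^2)^(n-2)) := by
      intro x
      have hterm : ∀ i : Fin m,
          (fderiv ℝ h x (EuclideanSpace.single i 1)) ^ 2 / (1 + (x i) ^ 2)
            ≤ (n:ℝ)^2 * (ε + ‖x‖^2)^(n-2) := by
        intro i
        rw [hfd x i]
        have := term_bound2 (n:ℝ) (Real.sqrt (ε + ‖x‖^2) ^ (n-2)) (x i)
        rw [hS2 x] at this
        exact this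
      calc (∑ i, (fderiv ℝ h x (EuclideanSpace.single i 1)) ^ 2 / (1 + (x i) ^ 2))
          ≤ ∑ _i : Fin m, (n:ℝ)^2 * (ε + ‖x‖^2)^(n-2) :=
            Finset.sum_le_sum (fun i _ => hterm i)
        _ = (m:ℝ) * ((n:ℝ)^2 * (ε + ‖x‖^2)^(n-2)) := by
            rw [Finset.sum_const, Finset.card_univ, Fintype.card_fin, nsmul_eq_mul]
    -- integrability of the gradient sum
    have hGmeas : Continuous (fun x : EuclideanSpace ℝ (Fin m) =>
        ∑ i, (φ' (‖x‖^2) * (2 * x i)) ^ 2 / (1 + (x i) ^ 2)) := by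
      simp only [hφ'def]
      apply continuous_finset_sum
      intro i _
      refine Continuous.div ?_ (continuous_const.add ((EuclideanSpace.proj i).continuous.pow 2))
        (fun x => by positivity)
      exact Continuous.pow (Continuous.mul (continuous_const.mul
        ((Real.continuous_sqrt.comp
          (continuous_const.add ((continuous_norm).pow 2))).pow (n-2)))
        (continuous_const.mul (EuclideanSpace.proj i).continuous)) 2
    have hGint : Integrable (fun x =>
        ∑ i, (fderiv ℝ h x (EuclideanSpace.single i 1)) ^ 2 / (1 + (x i) ^ 2)) μ := by
      have heqf : (fun x => ∑ i, (fderiv ℝ h x (EuclideanSpace.single i 1)) ^ 2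
            / (1 + (x i) ^ 2))
          = fun x => ∑ i, (φ' (‖x‖^2) * (2 * x i)) ^ 2 / (1 + (x i) ^ 2) := by
        funext x; exact Finset.sum_congr rfl (fun i _ => by rw [hfd x i])
      rw [heqf]
      refine Integrable.mono' ((hIε ε hε hε1 (n-2)).const_mul ((m:ℝ) * (n:ℝ)^2))
        hGmeas.aestronglyMeasurable (Filter.Eventually.of_forall fun x => ?_)
      have h2 : (0:ℝ) ≤ ∑ i, (φ' (‖x‖^2) * (2 * x i)) ^ 2 / (1 + (x i) ^ 2) := by
        apply Finset.sum_nonneg; intro i _; positivity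
      rw [Real.norm_of_nonneg h2]
      have heq : ∑ i, (φ' (‖x‖^2) * (2 * x i)) ^ 2 / (1 + (x i) ^ 2)
          = ∑ i, (fderiv ℝ h x (EuclideanSpace.single i 1)) ^ 2 / (1 + (x i) ^ 2) :=
        Finset.sum_congr rfl (fun i _ => by rw [hfd x i])
      rw [heq]
      exact (hsum x).trans (le_of_eq (by ring))
    -- gradient integral bound
    have hgradInt : ∫ x, ∑ i, (fderiv ℝ h x (EuclideanSpace.single i 1)) ^ 2
          / (1 + (x i)^2) ∂μ
        ≤ (m:ℝ) * (n:ℝ)^2 * ∫ x, (ε + ‖x‖^2)^(n-2) ∂μ := by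
      calc ∫ x, ∑ i, (fderiv ℝ h x (EuclideanSpace.single i 1)) ^ 2 / (1 + (x i)^2) ∂μ
          ≤ ∫ x, (m:ℝ) * (n:ℝ)^2 * (ε + ‖x‖^2)^(n-2) ∂μ := by
            refine integral_mono hGint ((hIε ε hε hε1 (n-2)).const_mul _) (fun x => ?_)
            exact (hsum x).trans (le_of_eq (by ring))
        _ = (m:ℝ) * (n:ℝ)^2 * ∫ x, (ε + ‖x‖^2)^(n-2) ∂μ := integral_const_mul _ _
    -- lower bound for the LHS
    have hlhs : ∫ x, ‖x‖ ^ (2 * n) ∂μ ≤ ∫ x, (h x)^2 ∂μ := by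
      refine integral_mono (hA n) ?_ (fun x => ?_)
      · exact ((hIε ε hε hε1 n).congr (Filter.Eventually.of_forall fun x => (hsq x).symm))
      · rw [hsq x, pow_mul]
        exact pow_le_pow_left₀ (by positivity) (by linarith [sq_nonneg ‖x‖]) _
    -- rewrite the ball term
    have hballeq : ∫ x in Metric.ball (0 : EuclideanSpace ℝ (Fin m)) (R + 1), (h x)^2 ∂μ
        = ∫ x in Metric.ball (0 : EuclideanSpace ℝ (Fin m)) (R + 1), (ε + ‖x‖^2)^n ∂μ :=
      setIntegral_congr_fun measurableSet_ball (fun x _ => hsq x)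
    calc ∫ x, ‖x‖ ^ (2 * n) ∂μ
        ≤ ∫ x, (h x)^2 ∂μ := hlhs
      _ ≤ l₁ * ∫ x, ∑ i, (fderiv ℝ h x (EuclideanSpace.single i 1)) ^ 2 / (1 + (x i)^2) ∂μ
          + l₂ * ∫ x in Metric.ball (0 : EuclideanSpace ℝ (Fin m)) (R+1), (h x)^2 ∂μ := key0
      _ ≤ l₁ * ((m:ℝ) * (n:ℝ)^2 * ∫ x, (ε + ‖x‖^2)^(n-2) ∂μ)
          + l₂ * ∫ x in Metric.ball (0 : EuclideanSpace ℝ (Fin m)) (R+1), (ε + ‖x‖^2)^n ∂μ := by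
            rw [hballeq]
            exact add_le_add (mul_le_mul_of_nonneg_left hgradInt hl₁.le) le_rfl
  -- pass to the limit ε → 0
  have hεlim : Filter.Tendsto (fun j : ℕ => 1/((j:ℝ)+1)) Filter.atTop (nhds 0) :=
    tendsto_one_div_add_atTop_nhds_zero_nat
  have hεpos : ∀ j : ℕ, (0:ℝ) < 1/((j:ℝ)+1) := fun j => by positivity
  have hεle : ∀ j : ℕ, 1/((j:ℝ)+1) ≤ 1 := fun j => by
    rw [div_le_one (by positivity)]; linarith [Nat.cast_nonneg (α := ℝ) j]
  have hT1 : Filter.Tendsto (fun j : ℕ => ∫ x, (1/((j:ℝ)+1) + ‖x‖^2)^(n-2) ∂μ)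
      Filter.atTop (nhds (∫ x, ‖x‖^(2*(n-2)) ∂μ)) := by
    refine MeasureTheory.tendsto_integral_of_dominated_convergence
      (fun x => (1+‖x‖^2)^(n-2)) (fun j =>
        ((continuous_const.add ((continuous_norm).pow 2)).pow (n-2)).aestronglyMeasurable)
      (hIone (n-2)) (fun j => Filter.Eventually.of_forall fun x => ?_)
      (Filter.Eventually.of_forall fun x => ?_)
    · rw [Real.norm_of_nonneg (by positivity)]
      exact pow_le_pow_left₀ (by positivity) (by nlinarith [sq_nonneg ‖x‖, hεle j]) _
    · have := (hεlim.add (tendsto_const_nhds (x := ‖x‖^2))).pow (n-2)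
      rw [zero_add] at this
      simpa [pow_mul] using this
  have hT2 : Filter.Tendsto (fun j : ℕ =>
        ∫ x in Metric.ball (0 : EuclideanSpace ℝ (Fin m)) (R + 1), (1/((j:ℝ)+1) + ‖x‖^2)^n ∂μ)
      Filter.atTop
      (nhds (∫ x in Metric.ball (0 : EuclideanSpace ℝ (Fin m)) (R + 1), ‖x‖^(2*n) ∂μ)) := by
    refine MeasureTheory.tendsto_integral_of_dominated_convergence
      (fun x => (1+‖x‖^2)^n) (fun j =>
        ((continuous_const.add ((continuous_norm).pow 2)).pow n).aestronglyMeasurable)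
      ((hIone n).restrict) (fun j => Filter.Eventually.of_forall fun x => ?_)
      (Filter.Eventually.of_forall fun x => ?_)
    · rw [Real.norm_of_nonneg (by positivity)]
      exact pow_le_pow_left₀ (by positivity) (by nlinarith [sq_nonneg ‖x‖, hεle j]) _
    · have := (hεlim.add (tendsto_const_nhds (x := ‖x‖^2))).pow n
      rw [zero_add] at this
      simpa [pow_mul] using this
  have hlim : Filter.Tendsto (fun j : ℕ =>
      l₁ * ((m:ℝ) * (n:ℝ)^2 * ∫ x, (1/((j:ℝ)+1) + ‖x‖^2)^(n-2) ∂μ)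
        + l₂ * ∫ x in Metric.ball (0 : EuclideanSpace ℝ (Fin m)) (R + 1),
            (1/((j:ℝ)+1) + ‖x‖^2)^n ∂μ) Filter.atTop
      (nhds (l₁ * ((m:ℝ) * (n:ℝ)^2 * ∫ x, ‖x‖^(2*(n-2)) ∂μ)
        + l₂ * ∫ x in Metric.ball (0 : EuclideanSpace ℝ (Fin m)) (R + 1), ‖x‖^(2*n) ∂μ)) :=
    (((hT1.const_mul ((m:ℝ) * (n:ℝ)^2)).const_mul l₁).add (hT2.const_mul l₂))
  have hle := ge_of_tendsto' hlim key
  -- bound the ball term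
  have hball2 : ∫ x in Metric.ball (0 : EuclideanSpace ℝ (Fin m)) (R + 1), ‖x‖^(2*n) ∂μ
      ≤ (R+1)^2 * ∫ x, ‖x‖^(2*(n-1)) ∂μ := by
    calc ∫ x in Metric.ball (0 : EuclideanSpace ℝ (Fin m)) (R + 1), ‖x‖^(2*n) ∂μ
        ≤ ∫ x in Metric.ball (0 : EuclideanSpace ℝ (Fin m)) (R + 1),
            (R+1)^2 * ‖x‖^(2*(n-1)) ∂μ := by
          refine setIntegral_mono_on (hA n).integrableOn
            (((hA (n-1)).const_mul _).integrableOn) measurableSet_ball (fun x hx => ?_)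
          rw [show 2*n = 2 + 2*(n-1) by omega, pow_add]
          refine mul_le_mul_of_nonneg_right ?_ (by positivity)
          exact pow_le_pow_left₀ (norm_nonneg x) (le_of_lt (mem_ball_zero_iff.1 hx)) 2
      _ = (R+1)^2 * ∫ x in Metric.ball (0 : EuclideanSpace ℝ (Fin m)) (R + 1),
            ‖x‖^(2*(n-1)) ∂μ := integral_const_mul _ _
      _ ≤ (R+1)^2 * ∫ x, ‖x‖^(2*(n-1)) ∂μ := by
          refine mul_le_mul_of_nonneg_left ?_ (by positivity)
          exact setIntegral_le_integral (hA (n-1))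
            (Filter.Eventually.of_forall fun x => by positivity)
  calc ∫ x, ‖x‖ ^ (2 * n) ∂μ
      ≤ l₁ * ((m:ℝ) * (n:ℝ)^2 * ∫ x, ‖x‖^(2*(n-2)) ∂μ)
        + l₂ * ∫ x in Metric.ball (0 : EuclideanSpace ℝ (Fin m)) (R + 1), ‖x‖^(2*n) ∂μ := hle
    _ ≤ l₁ * ((m:ℝ) * (n:ℝ)^2 * ∫ x, ‖x‖^(2*(n-2)) ∂μ)
        + l₂ * ((R+1)^2 * ∫ x, ‖x‖^(2*(n-1)) ∂μ) := by
          exact add_le_add_right (mul_le_mul_of_nonneg_left hball2 hl₂) _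
    _ = l₁ * m * (n : ℝ) ^ 2 * ∫ x, ‖x‖ ^ (2 * (n - 2)) ∂μ
        + l₂ * (R + 1) ^ 2 * ∫ x, ‖x‖ ^ (2 * (n - 1)) ∂μ := by ring
end Step2

theorem gozlan_poincare_moments {m : ℕ}
    (μ : Measure (EuclideanSpace ℝ (Fin m))) [IsProbabilityMeasure μ]
    (l₁ l₂ R : ℝ) (hl₁ : 0 < l₁) (hl₂ : 0 ≤ l₂) (hR : 0 < R)
    (hPoin : ∀ h : EuclideanSpace ℝ (Fin m) → ℝ, ContDiff ℝ 1 h →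
      (∃ C : ℝ, ∃ k : ℕ, ∀ x, |h x| ≤ C * (1 + ‖x‖) ^ k) →
      ∫ x, (h x) ^ 2 ∂μ
        ≤ l₁ * ∫ x, ∑ i, (fderiv ℝ h x (EuclideanSpace.single i 1)) ^ 2 / (1 + (x i) ^ 2) ∂μ
          + l₂ * ∫ x in Metric.ball (0 : EuclideanSpace ℝ (Fin m)) (R + 1), (h x) ^ 2 ∂μ) :
    (∀ n : ℕ, Integrable (fun x => ‖x‖ ^ (2 * n)) μ) ∧
    (∀ n : ℕ, 2 ≤ n →
      ∫ x, ‖x‖ ^ (2 * n) ∂μ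
        ≤ l₁ * m * (n : ℝ) ^ 2 * ∫ x, ‖x‖ ^ (2 * (n - 2)) ∂μ
          + l₂ * (R + 1) ^ 2 * ∫ x, ‖x‖ ^ (2 * (n - 1)) ∂μ) := by
  have h4 : ∀ k : ℕ, Integrable (fun x => ‖x‖ ^ (4*k)) μ := by
    intro k
    induction k with
    | zero => simpa using integrable_const (μ := μ) (1:ℝ)
    | succ k ihk =>
        have hs := step1 μ l₁ l₂ R hl₁ hl₂ hR hPoin k ihk
        have e : 4*(k+1) = 4*k+4 := by ring
        rw [e]
        exact hs
  have hA : ∀ n : ℕ, Integrable (fun x => ‖x‖ ^ (2*n)) μ := by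
    intro n
    refine Integrable.mono' ((integrable_const (1:ℝ)).add (h4 n))
      ((continuous_norm.pow (2*n)).aestronglyMeasurable)
      (Filter.Eventually.of_forall fun x => ?_)
    rw [Real.norm_of_nonneg (by positivity)]
    rcases le_total ‖x‖ 1 with hx | hx
    · have h1 : ‖x‖^(2*n) ≤ 1 := pow_le_one₀ (norm_nonneg x) hx
      have h2 : (0:ℝ) ≤ ‖x‖^(4*n) := by positivity
      simp only [Pi.add_apply]
      linarith
    · have h1 : ‖x‖^(2*n) ≤ ‖x‖^(4*n) := pow_le_pow_right₀ hx (by omega)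
      simp only [Pi.add_apply]
      linarith
  exact ⟨hA, fun n hn => step2 μ l₁ l₂ R hl₁ hl₂ hR hPoin hA n hn⟩
end
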